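/- arXiv:0812.1716 — 5 statements merged into one kernel-verified Lean document; each statement's English description precedes it below -/
import Mathlib

section
/- For every i ∈ I, the group endomorphism T_i of 𝒫 is bijective, i.e. T_i is an automorphism of 𝒫. -/
open Finsupp

/-- The ℓ-weight lattice 𝒫: the free abelian group (written additively) on
generators `π_{i,a}` for `i ∈ I`, `a ∈ ℂˣ`, realized as finitely supported
functions `I × ℂˣ → ℤ`. -/
abbrev LWeightLattice (I : Type*) := (I × ℂˣ) →₀ ℤ

/-- The generator `π_{i,a}` of 𝒫. -/
noncomputable def piGen {I : Type*} (i : I) (a : ℂˣ) : LWeightLattice I :=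
  Finsupp.single (i, a) 1

/-- The image of the generator `π_{j,a}` (given as the pair `p = (j,a)`) under `T_i`. -/
noncomputable def TGen {I : Type*} [Fintype I] [DecidableEq I]
    (A : I → I → ℤ) (d : I → ℕ) (q : ℂˣ) (i : I) (p : I × ℂˣ) : LWeightLattice I :=
  if p.1 = i then
    -piGen i (p.2 * (q ^ d i) ^ 2)
      + ∑ j ∈ Finset.univ.filter (fun j => A j i = -1), piGen j (p.2 * q ^ d i)
      + ∑ j ∈ Finset.univ.filter (fun j => A j i = -2),
          (piGen j (p.2 * q) + piGen j (p.2 * q ^ 3))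
      + ∑ j ∈ Finset.univ.filter (fun j => A j i = -3),
          (piGen j (p.2 * q) + piGen j (p.2 * q ^ 3) + piGen j (p.2 * q ^ 5))
  else piGen p.1 p.2

/-- The endomorphism `T_i` of 𝒫, the unique group endomorphism extending `TGen`. -/
noncomputable def TEnd {I : Type*} [Fintype I] [DecidableEq I]
    (A : I → I → ℤ) (d : I → ℕ) (q : ℂˣ) (i : I) : AddMonoid.End (LWeightLattice I) :=
  Finsupp.liftAddHom fun p => zmultiplesHom _ (TGen A d q i p)

/-- The ℓ-root `α_{i,a} := (T_i π_{i,a})⁻¹ · π_{i,a}`, written additively. -/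
noncomputable def lroot {I : Type*} [Fintype I] [DecidableEq I]
    (A : I → I → ℤ) (d : I → ℕ) (q : ℂˣ) (i : I) (a : ℂˣ) : LWeightLattice I :=
  piGen i a - TEnd A d q i (piGen i a)

section Aux

variable {I : Type*} [Fintype I] [DecidableEq I]
  (A : I → I → ℤ) (d : I → ℕ) (q : ℂˣ) (i : I)

/-- The "shift part" of `T_i π_{i,b}` (everything except the `-π_{i,bq_i²}` term). -/
noncomputable def SPart (b : ℂˣ) : LWeightLattice I :=
  (∑ j ∈ Finset.univ.filter (fun j => A j i = -1), piGen j (b * q ^ d i))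
  + ((∑ j ∈ Finset.univ.filter (fun j => A j i = -2),
        (piGen j (b * q) + piGen j (b * q ^ 3)))
  + (∑ j ∈ Finset.univ.filter (fun j => A j i = -3),
        (piGen j (b * q) + piGen j (b * q ^ 3) + piGen j (b * q ^ 5))))

lemma TGen_eq (a : ℂˣ) :
    TGen A d q i (i, a) = -piGen i (a * (q ^ d i) ^ 2) + SPart A d q i a := by
  unfold TGen SPart
  split
  · abel
  · next h => exact absurd rfl h

lemma TGen_ne {j : I} (h : j ≠ i) (a : ℂˣ) : TGen A d q i (j, a) = piGen j a := by
  simp [TGen, h]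

lemma TEnd_piGen (j : I) (a : ℂˣ) : TEnd A d q i (piGen j a) = TGen A d q i (j, a) := by
  change (Finsupp.liftAddHom (fun p => zmultiplesHom _ (TGen A d q i p)) :
    LWeightLattice I →+ LWeightLattice I) (Finsupp.single (j, a) 1) = _
  rw [Finsupp.liftAddHom_apply_single, zmultiplesHom_apply, one_smul]

/-- The candidate inverse on generators. -/
noncomputable def UGen (p : I × ℂˣ) : LWeightLattice I :=
  if p.1 = i then
    -piGen i (p.2 * ((q ^ d i) ^ 2)⁻¹) + SPart A d q i (p.2 * ((q ^ d i) ^ 2)⁻¹)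
  else piGen p.1 p.2

/-- The candidate inverse endomorphism. -/
noncomputable def UEnd : AddMonoid.End (LWeightLattice I) :=
  Finsupp.liftAddHom fun p => zmultiplesHom _ (UGen A d q i p)

lemma UEnd_piGen (j : I) (a : ℂˣ) : UEnd A d q i (piGen j a) = UGen A d q i (j, a) := by
  change (Finsupp.liftAddHom (fun p => zmultiplesHom _ (UGen A d q i p)) :
    LWeightLattice I →+ LWeightLattice I) (Finsupp.single (j, a) 1) = _
  rw [Finsupp.liftAddHom_apply_single, zmultiplesHom_apply, one_smul]

lemma TEnd_fix {j : I} (h : j ≠ i) (a : ℂˣ) : TEnd A d q i (piGen j a) = piGen j a := by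
  rw [TEnd_piGen, TGen_ne _ _ _ _ h]

lemma UEnd_fix {j : I} (h : j ≠ i) (a : ℂˣ) : UEnd A d q i (piGen j a) = piGen j a := by
  rw [UEnd_piGen, UGen, if_neg h]

lemma fix_SPart (hAdiag : A i i = 2) (E : AddMonoid.End (LWeightLattice I))
    (hE : ∀ j : I, j ≠ i → ∀ a : ℂˣ, E (piGen j a) = piGen j a) (b : ℂˣ) :
    E (SPart A d q i b) = SPart A d q i b := by
  have key : ∀ (c : ℤ), c ≠ 2 → ∀ j ∈ Finset.univ.filter (fun j => A j i = c), j ≠ i := by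
    intro c hc j hj hji
    rw [Finset.mem_filter, hji, hAdiag] at hj
    exact hc hj.2.symm
  unfold SPart
  simp only [map_add, map_sum]
  congr 1
  · exact Finset.sum_congr rfl fun j hj => hE j (key (-1) (by norm_num) j hj) _
  congr 1
  · refine Finset.sum_congr rfl fun j hj => ?_
    have hji := key (-2) (by norm_num) j hj
    rw [hE j hji, hE j hji]
  · refine Finset.sum_congr rfl fun j hj => ?_
    have hji := key (-3) (by norm_num) j hj
    rw [hE j hji, hE j hji, hE j hji]

lemma TEnd_UGen (hAdiag : A i i = 2) (p : I × ℂˣ) :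
    TEnd A d q i (UGen A d q i p) = piGen p.1 p.2 := by
  obtain ⟨j, a⟩ := p
  rcases eq_or_ne j i with h | h
  · rw [h]
    rw [UGen, if_pos rfl]
    dsimp only
    rw [map_add, map_neg, TEnd_piGen, TGen_eq,
      fix_SPart A d q i hAdiag _ (fun j hj a => TEnd_fix A d q i hj a),
      inv_mul_cancel_right]
    abel
  · rw [UGen, if_neg h, TEnd_fix A d q i h]

lemma UEnd_TGen (hAdiag : A i i = 2) (p : I × ℂˣ) :
    UEnd A d q i (TGen A d q i p) = piGen p.1 p.2 := by
  obtain ⟨j, a⟩ := p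
  rcases eq_or_ne j i with h | h
  · rw [h]
    rw [TGen_eq]
    rw [map_add, map_neg, UEnd_piGen, UGen, if_pos rfl,
      fix_SPart A d q i hAdiag _ (fun j hj a => UEnd_fix A d q i hj a)]
    dsimp only
    rw [mul_inv_cancel_right]
    abel
  · rw [TGen_ne _ _ _ _ h, UEnd_fix A d q i h]

lemma single_eq_smul (p : I × ℂˣ) (n : ℤ) :
    (Finsupp.single p n : LWeightLattice I) = n • piGen p.1 p.2 := by
  rw [piGen, Finsupp.smul_single, smul_eq_mul, mul_one]

lemma TEnd_leftInv (hAdiag : A i i = 2) (x : LWeightLattice I) :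
    UEnd A d q i (TEnd A d q i x) = x := by
  have : (UEnd A d q i).comp (TEnd A d q i) = AddMonoidHom.id _ := by
    refine Finsupp.addHom_ext fun p n => ?_
    change UEnd A d q i (TEnd A d q i (Finsupp.single p n)) = Finsupp.single p n
    rw [single_eq_smul, map_zsmul, map_zsmul,
      TEnd_piGen, UEnd_TGen A d q i hAdiag]
  exact DFunLike.congr_fun this x

lemma TEnd_rightInv (hAdiag : A i i = 2) (x : LWeightLattice I) :
    TEnd A d q i (UEnd A d q i x) = x := by
  have : (TEnd A d q i).comp (UEnd A d q i) = AddMonoidHom.id _ := by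
    refine Finsupp.addHom_ext fun p n => ?_
    change TEnd A d q i (UEnd A d q i (Finsupp.single p n)) = Finsupp.single p n
    rw [single_eq_smul, map_zsmul, map_zsmul,
      UEnd_piGen, TEnd_UGen A d q i hAdiag]
  exact DFunLike.congr_fun this x

end Aux

/-- each `T_i` is an automorphism of 𝒫. -/
theorem TEnd_bijective
    {I : Type*} [Fintype I] [DecidableEq I]
    (q : ℂˣ) (hq : ∀ n : ℕ, 1 ≤ n → q ^ n ≠ 1)
    (A : I → I → ℤ) (d : I → ℕ)
    (hAdiag : ∀ i, A i i = 2)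
    (hAoff : ∀ i j, i ≠ j → A i j ∈ ({0, -1, -2, -3} : Set ℤ))
    (hAzero : ∀ i j, A i j = 0 ↔ A j i = 0)
    (hAprod : ∀ i j, i ≠ j → A i j * A j i ≤ 3)
    (hd : ∀ i, 0 < d i)
    (hsym : ∀ i j, (d i : ℤ) * A i j = (d j : ℤ) * A j i)
    (i : I) :
    Function.Bijective (TEnd A d q i) :=
  Function.bijective_iff_has_inverse.mpr
    ⟨UEnd A d q i, TEnd_leftInv A d q i (hAdiag i), TEnd_rightInv A d q i (hAdiag i)⟩
end

section
/- For every i ∈ I, the automorphism T_i of 𝒫 maps the subgroup 𝒬 into itself: T_i(𝒬) ⊆ 𝒬. In particular, for all j ∈ I and a ∈ ℂˣ, T_i(α_{j,a}) lies in the subgroup generated by the elements α_{k,b} (k ∈ I, b ∈ ℂˣ). -/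
open Finsupp

/-- `T_i` maps the ℓ-root lattice 𝒬 (the subgroup generated by the
`α_{j,a}`) into itself; in particular each `T_i(α_{j,a})` lies in 𝒬. -/
theorem TEnd_maps_lroot_lattice
    {I : Type*} [Fintype I] [DecidableEq I]
    (q : ℂˣ) (hq : ∀ n : ℕ, 1 ≤ n → q ^ n ≠ 1)
    (A : I → I → ℤ) (d : I → ℕ)
    (hAdiag : ∀ i, A i i = 2)
    (hAoff : ∀ i j, i ≠ j → A i j ∈ ({0, -1, -2, -3} : Set ℤ))
    (hAzero : ∀ i j, A i j = 0 ↔ A j i = 0)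
    (hAprod : ∀ i j, i ≠ j → A i j * A j i ≤ 3)
    (hd : ∀ i, 0 < d i)
    (hsym : ∀ i j, (d i : ℤ) * A i j = (d j : ℤ) * A j i)
    (i : I) :
    (∀ x ∈ AddSubgroup.closure
        (Set.range fun p : I × ℂˣ => lroot A d q p.1 p.2),
      TEnd A d q i x ∈ AddSubgroup.closure
        (Set.range fun p : I × ℂˣ => lroot A d q p.1 p.2)) ∧
    (∀ (j : I) (a : ℂˣ),
      TEnd A d q i (lroot A d q j a) ∈ AddSubgroup.closure
        (Set.range fun p : I × ℂˣ => lroot A d q p.1 p.2)) := by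
  set Q := AddSubgroup.closure (Set.range fun p : I × ℂˣ => lroot A d q p.1 p.2) with hQ
  have hgen : ∀ (j : I) (a : ℂˣ), lroot A d q j a ∈ Q := fun j a =>
    AddSubgroup.subset_closure ⟨(j, a), rfl⟩
  have hTsingle : ∀ p : I × ℂˣ, TEnd A d q i (Finsupp.single p (1 : ℤ)) = TGen A d q i p := by
    intro p
    refine (Finsupp.liftAddHom_apply_single (fun p => zmultiplesHom _ (TGen A d q i p)) p (1 : ℤ)).trans ?_
    simp
  have key : ∀ x : LWeightLattice I, TEnd A d q i x - x ∈ Q := by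
    intro x
    induction x using Finsupp.induction_linear with
    | zero => simpa using Q.zero_mem
    | add f g hf hg =>
        have h := Q.add_mem hf hg
        rw [map_add]
        convert h using 1
        abel
    | single p n =>
        obtain ⟨j, a⟩ := p
        have h1 : Finsupp.single (j, a) n = n • Finsupp.single (j, a) (1 : ℤ) := by
          simp
        rw [h1, map_zsmul, ← smul_sub]
        apply zsmul_mem
        rw [hTsingle]
        by_cases hp : j = i
        · subst hp
          have hpe : TEnd A d q j (piGen j a) = TGen A d q j (j, a) := hTsingle (j, a)
          have h2 : TGen A d q j (j, a) - Finsupp.single (j, a) (1 : ℤ) =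
              -(lroot A d q j a) := by
            rw [lroot, hpe, piGen]
            abel
          rw [h2]
          exact Q.neg_mem (hgen j a)
        · have : TGen A d q i (j, a) = Finsupp.single (j, a) (1 : ℤ) := by
            simp [TGen, hp, piGen]
          rw [this]
          simpa using Q.zero_mem
  have main : ∀ x ∈ Q, TEnd A d q i x ∈ Q := by
    intro x hx
    have := Q.add_mem (key x) hx
    simpa using this
  exact ⟨main, fun j a => main _ (hgen j a)⟩
end

section
/- Assume in addition that there exist positive integers c_j (j ∈ I) with ∑_{j∈I} c_j·a_{ji} > 0 for every i ∈ I (this holds whenever A is a Cartan matrix of finite type). Then 𝒬⁺ ∩ 𝒬⁻ = {1}; consequently the relation ϖ ≼ ϖ′ ⟺ ϖ ∈ ϖ′·𝒬⁻ is a partial order on 𝒫. -/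
open Finsupp

section Aux

variable {I : Type*} [Fintype I] [DecidableEq I]

/-- The additive functional `φ` with `φ(π_{j,a}) = c j`. -/
noncomputable def cFun (c : I → ℤ) : LWeightLattice I →+ ℤ :=
  Finsupp.liftAddHom fun p => zmultiplesHom ℤ (c p.1)

lemma cFun_piGen (c : I → ℤ) (j : I) (a : ℂˣ) : cFun c (piGen j a) = c j := by
  simp [cFun, piGen]

lemma cFun_lroot (A : I → I → ℤ) (d : I → ℕ) (q : ℂˣ) (c : I → ℤ)
    (hAdiag : ∀ i, A i i = 2)
    (hAoff : ∀ i j, i ≠ j → A i j ∈ ({0, -1, -2, -3} : Set ℤ))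
    (i : I) (a : ℂˣ) :
    cFun c (lroot A d q i a) = ∑ j, c j * A j i := by
  have hT : (TEnd A d q i) (piGen i a) = TGen A d q i (i, a) := by
    rw [TEnd, piGen]
    show (Finsupp.liftAddHom (fun p => zmultiplesHom _ (TGen A d q i p)) : (I × ℂˣ →₀ ℤ) →+ LWeightLattice I) (Finsupp.single (i, a) 1) = _
    rw [Finsupp.liftAddHom_apply_single]
    exact one_zsmul _
  have hTG : cFun c (TGen A d q i (i, a)) =
      -c i + (∑ j ∈ Finset.univ.filter (fun j => A j i = -1), c j)
        + (∑ j ∈ Finset.univ.filter (fun j => A j i = -2), (c j + c j))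
        + (∑ j ∈ Finset.univ.filter (fun j => A j i = -3), (c j + c j + c j)) := by
    simp only [TGen, eq_self_iff_true, if_true, map_add, map_neg, map_sum, cFun_piGen]
  have key : ∑ j, c j * A j i = ∑ j : I, ((if j = i then 2 * c i else 0)
      - (if A j i = -1 then c j else 0)
      - (if A j i = -2 then c j + c j else 0)
      - (if A j i = -3 then c j + c j + c j else 0)) := by
    refine Finset.sum_congr rfl fun j _ => ?_
    by_cases hji : j = i
    · subst hji
      simp only [if_pos rfl, hAdiag j]
      norm_num
      ring
    · have h := hAoff j i hji
      simp only [Set.mem_insert_iff, Set.mem_singleton_iff] at h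
      rcases h with h | h | h | h <;> simp [h, hji] <;> ring
  rw [lroot, map_sub, hT, hTG, cFun_piGen, key]
  rw [Finset.sum_sub_distrib, Finset.sum_sub_distrib, Finset.sum_sub_distrib,
    Finset.sum_ite_eq' Finset.univ i (fun _ => 2 * c i),
    ← Finset.sum_filter, ← Finset.sum_filter, ← Finset.sum_filter]
  simp only [Finset.mem_univ, if_pos]
  ring

end Aux

/-- if there are positive integers `c_j` with
`∑_j c_j·a_{ji} > 0` for every `i`, then `𝒬⁺ ∩ 𝒬⁻ = {1}` (written additively,
`{0}`), and consequently `ϖ ≼ ϖ′ ⟺ ϖ ∈ ϖ′·𝒬⁻` is a partial order on 𝒫. -/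


theorem Qplus_inter_Qminus_trivial
    {I : Type*} [Fintype I] [DecidableEq I]
    (q : ℂˣ) (hq : ∀ n : ℕ, 1 ≤ n → q ^ n ≠ 1)
    (A : I → I → ℤ) (d : I → ℕ)
    (hAdiag : ∀ i, A i i = 2)
    (hAoff : ∀ i j, i ≠ j → A i j ∈ ({0, -1, -2, -3} : Set ℤ))
    (hAzero : ∀ i j, A i j = 0 ↔ A j i = 0)
    (hAprod : ∀ i j, i ≠ j → A i j * A j i ≤ 3)
    (hd : ∀ i, 0 < d i)
    (hsym : ∀ i j, (d i : ℤ) * A i j = (d j : ℤ) * A j i)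
    (c : I → ℤ) (hc : ∀ j, 0 < c j)
    (hpos : ∀ i, 0 < ∑ j, c j * A j i) :
    ((AddSubmonoid.closure (Set.range fun p : I × ℂˣ => lroot A d q p.1 p.2) : Set (LWeightLattice I))
        ∩ (AddSubmonoid.closure (Set.range fun p : I × ℂˣ => -lroot A d q p.1 p.2) : Set (LWeightLattice I))
      = {0}) ∧
    IsPartialOrder (LWeightLattice I)
      (fun ϖ ϖ' => ϖ - ϖ' ∈
        AddSubmonoid.closure (Set.range fun p : I × ℂˣ => -lroot A d q p.1 p.2)) := by
  classical
  set Qm : AddSubmonoid (LWeightLattice I) :=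
    AddSubmonoid.closure (Set.range fun p : I × ℂˣ => -lroot A d q p.1 p.2) with hQmdef
  set Qp : AddSubmonoid (LWeightLattice I) :=
    AddSubmonoid.closure (Set.range fun p : I × ℂˣ => lroot A d q p.1 p.2) with hQpdef
  have hp : ∀ x ∈ Qp, x = 0 ∨ 0 < cFun c x := by
    intro x hx
    rw [hQpdef] at hx
    induction hx using AddSubmonoid.closure_induction with
    | mem x hx =>
      obtain ⟨p, rfl⟩ := hx
      right
      rw [cFun_lroot A d q c hAdiag hAoff]
      exact hpos p.1
    | zero => left; rfl
    | add x y _ _ ihx ihy =>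
      rcases ihx with rfl | ihx
      · simpa using ihy
      · rcases ihy with rfl | ihy
        · right; simpa using ihx
        · right; rw [map_add]; positivity
  have hm : ∀ x ∈ Qm, x = 0 ∨ cFun c x < 0 := by
    intro x hx
    rw [hQmdef] at hx
    induction hx using AddSubmonoid.closure_induction with
    | mem x hx =>
      obtain ⟨p, rfl⟩ := hx
      right
      rw [map_neg, cFun_lroot A d q c hAdiag hAoff]
      simpa using hpos p.1
    | zero => left; rfl
    | add x y _ _ ihx ihy =>
      rcases ihx with rfl | ihx
      · simpa using ihy
      · rcases ihy with rfl | ihy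
        · right; simpa using ihx
        · right; rw [map_add]; linarith
  constructor
  · ext x
    simp only [Set.mem_inter_iff, SetLike.mem_coe, Set.mem_singleton_iff]
    constructor
    · rintro ⟨hx1, hx2⟩
      rcases hp x hx1 with rfl | h1
      · rfl
      rcases hm x hx2 with rfl | h2
      · rfl
      linarith
    · rintro rfl
      exact ⟨AddSubmonoid.zero_mem _, AddSubmonoid.zero_mem _⟩
  · refine { refl := ?_, trans := ?_, antisymm := ?_ }
    · intro a
      rw [sub_self]
      exact AddSubmonoid.zero_mem _
    · intro a b cc h1 h2
      have := AddSubmonoid.add_mem _ h1 h2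
      rwa [sub_add_sub_cancel] at this
    · intro a b h1 h2
      rcases hm _ h1 with h | hlt
      · exact sub_eq_zero.mp h
      rcases hm _ h2 with h | hlt2
      · exact (sub_eq_zero.mp h).symm
      have : b - a = -(a - b) := (neg_sub a b).symm
      rw [this, map_neg] at hlt2
      linarith
end

section
/- (Existence of the q-factorization.) For every polynomial π ∈ ℂ[u] with constant coefficient 1 there exists a finite multiset S of pairs (m,a) with m a positive integer and a ∈ ℂˣ, whose elements are pairwise in general position, such that π = ∏_{(m,a) ∈ S} π_a^m. -/
open Polynomial

/-- The q-string polynomial `π_a^m(u) = ∏_{j=1}^m (1 − q^{m−2j+1}·a·u)`. -/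
noncomputable def qString (q a : ℂ) (m : ℕ) : Polynomial ℂ :=
  ∏ j ∈ Finset.range m,
    (1 - Polynomial.C (q ^ ((m : ℤ) - 2 * ((j : ℤ) + 1) + 1) * a) * Polynomial.X)

/-- The pairs `(m,a)` and `(r,b)` are in general position: `a/b ≠ q^s` for
every integer `s` with `|m − r| + 2 ≤ |s| ≤ m + r` and `s ≡ m + r (mod 2)`. -/
def GenPos (q : ℂ) (p₁ p₂ : ℕ × ℂ) : Prop :=
  ∀ s : ℤ, |(p₁.1 : ℤ) - (p₂.1 : ℤ)| + 2 ≤ |s| → |s| ≤ (p₁.1 : ℤ) + (p₂.1 : ℤ) →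
    s % 2 = ((p₁.1 : ℤ) + (p₂.1 : ℤ)) % 2 → p₁.2 / p₂.2 ≠ q ^ s

/-- auxiliary string with lowest factor `b`, exponents `0,2,…,2(m−1)`. -/
noncomputable def qStr (q b : ℂ) (m : ℕ) : Polynomial ℂ :=
  ∏ j ∈ Finset.range m, (1 - Polynomial.C (q ^ (2 * (j : ℤ)) * b) * Polynomial.X)

lemma qString_eq_qStr (q a : ℂ) (hq0 : q ≠ 0) (m : ℕ) :
    qString q a m = qStr q (q ^ (1 - (m : ℤ)) * a) m := by
  unfold qString qStr
  rw [← Finset.prod_range_reflect]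
  refine Finset.prod_congr rfl fun j hj => ?_
  rw [Finset.mem_range] at hj
  have h1 : ((m - 1 - j : ℕ) : ℤ) = (m : ℤ) - 1 - j := by omega
  congr 1
  rw [h1, ← mul_assoc, ← zpow_add₀ hq0]
  congr 2
  ring_nf

lemma qStr_eq_qString (q b : ℂ) (hq0 : q ≠ 0) (m : ℕ) :
    qStr q b m = qString q (q ^ ((m : ℤ) - 1) * b) m := by
  rw [qString_eq_qStr q _ hq0 m, ← mul_assoc, ← zpow_add₀ hq0]
  norm_num

lemma qStr_shift (q b : ℂ) (hq0 : q ≠ 0) (t n : ℕ) :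
    qStr q (q ^ (2 * (t : ℤ)) * b) n
      = ∏ x ∈ Finset.Ico t (t + n), (1 - Polynomial.C (q ^ (2 * (x : ℤ)) * b) * Polynomial.X) := by
  rw [Finset.prod_Ico_eq_prod_range]
  simp only [add_tsub_cancel_left]
  refine Finset.prod_congr rfl fun j _ => ?_
  congr 1
  rw [← mul_assoc, ← zpow_add₀ hq0]
  congr 2
  push_cast
  ring_nf

lemma qStr_merge (q b : ℂ) (hq0 : q ≠ 0) (u r m : ℕ) (hur : u ≤ r) (hrm : r ≤ u + m) :
    qStr q b r * qStr q (q ^ (2 * (u : ℤ)) * b) m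
      = qStr q b (u + m) * qStr q (q ^ (2 * (u : ℤ)) * b) (r - u) := by
  have e0 : ∀ k : ℕ, qStr q b k
      = ∏ x ∈ Finset.Ico 0 k, (1 - Polynomial.C (q ^ (2 * (x : ℤ)) * b) * Polynomial.X) := by
    intro k; unfold qStr; rw [Finset.range_eq_Ico]
  have e1 := qStr_shift q b hq0 u m
  have e2 := qStr_shift q b hq0 u (r - u)
  rw [e0, e0, e1, e2]
  have hru : u + (r - u) = r := by omega
  rw [hru]
  have hunion : Finset.Ico 0 r ∪ Finset.Ico u (u + m) = Finset.Ico 0 (u + m) := by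
    rw [Finset.Ico_union_Ico' hur (Nat.zero_le _)]
    congr 1
    · omega
  have hinter : Finset.Ico 0 r ∩ Finset.Ico u (u + m) = Finset.Ico u r := by
    rw [Finset.Ico_inter_Ico]
    congr 1
    · omega
  rw [← hunion, ← hinter, Finset.prod_union_inter]

lemma merge_core (q : ℂ) (hq0 : q ≠ 0) (m r : ℕ) (hm : 1 ≤ m) (hr : 1 ≤ r)
    (a c : ℂ) (hc : c ≠ 0) (s : ℤ)
    (h1 : |(m : ℤ) - (r : ℤ)| + 2 ≤ s) (h2 : s ≤ (m : ℤ) + r)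
    (hpar : s % 2 = ((m : ℤ) + r) % 2) (hac : a / c = q ^ s) :
    ∃ S₀ : Multiset (ℕ × ℂ),
      (∀ p ∈ S₀, 1 ≤ p.1 ∧ p.2 ≠ 0) ∧
      (S₀.map fun p => qString q p.2 p.1).prod = qString q a m * qString q c r ∧
      (S₀.map Prod.fst).sum = m + r ∧
      m * m + r * r < (S₀.map fun p => p.1 * p.1).sum := by
  have h1a : (m : ℤ) - r + 2 ≤ s := le_trans (by linarith [le_abs_self ((m:ℤ) - r)]) h1
  have h1b : (r : ℤ) - m + 2 ≤ s := le_trans (by linarith [neg_abs_le ((m:ℤ) - r)]) h1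
  have hs0 : 0 ≤ s := by linarith [abs_nonneg ((m:ℤ) - r)]
  have hσ : ((s.toNat : ℤ)) = s := Int.toNat_of_nonneg hs0
  obtain ⟨u, hu1, hu2, hu3, hu4⟩ :
      ∃ u : ℕ, 1 ≤ u ∧ u ≤ r ∧ s.toNat + r = m + 2 * u ∧ r < m + u := by
    refine ⟨(s.toNat + r - m) / 2, ?_, ?_, ?_, ?_⟩ <;> omega
  have ha : a = q ^ s * c := by
    field_simp at hac; linear_combination hac
  -- bases
  set β₂ : ℂ := q ^ (1 - (r : ℤ)) * c with hβ₂
  have hβ₂0 : β₂ ≠ 0 := mul_ne_zero (zpow_ne_zero _ hq0) hc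
  have hβ₁ : q ^ (1 - (m : ℤ)) * a = q ^ (2 * (u : ℤ)) * β₂ := by
    rw [ha, hβ₂, ← mul_assoc, ← mul_assoc, ← zpow_add₀ hq0, ← zpow_add₀ hq0]
    congr 2
    omega
  -- the merged product identity
  have key : qString q a m * qString q c r
      = qStr q β₂ (u + m) * qStr q (q ^ (2 * (u : ℤ)) * β₂) (r - u) := by
    rw [qString_eq_qStr q a hq0 m, qString_eq_qStr q c hq0 r, hβ₁, ← hβ₂,
      mul_comm (qStr q (q ^ (2 * (u : ℤ)) * β₂) m)]
    exact qStr_merge q β₂ hq0 u r m hu2 (by omega)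
  set A : ℂ := q ^ (((u + m : ℕ) : ℤ) - 1) * β₂ with hA
  set B : ℂ := q ^ (((r - u : ℕ) : ℤ) - 1) * (q ^ (2 * (u : ℤ)) * β₂) with hB
  have hA0 : A ≠ 0 := mul_ne_zero (zpow_ne_zero _ hq0) hβ₂0
  have hB0 : B ≠ 0 := mul_ne_zero (zpow_ne_zero _ hq0)
    (mul_ne_zero (zpow_ne_zero _ hq0) hβ₂0)
  have keyA : qStr q β₂ (u + m) = qString q A (u + m) := qStr_eq_qString q β₂ hq0 (u + m)
  have keyB : qStr q (q ^ (2 * (u : ℤ)) * β₂) (r - u) = qString q B (r - u) :=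
    qStr_eq_qString q _ hq0 (r - u)
  by_cases hru : r = u
  · refine ⟨{(u + m, A)}, ?_, ?_, ?_, ?_⟩
    · intro p hp
      simp only [Multiset.mem_singleton] at hp
      subst hp
      exact ⟨by omega, hA0⟩
    · simp only [Multiset.map_singleton, Multiset.prod_singleton]
      rw [key, keyA, hru]
      simp [qStr]
    · simp; omega
    · simp only [Multiset.map_singleton, Multiset.sum_singleton]
      nlinarith [hu1, hu4, hru]
  · refine ⟨{(u + m, A), (r - u, B)}, ?_, ?_, ?_, ?_⟩
    · intro p hp
      simp only [Multiset.insert_eq_cons, Multiset.mem_cons, Multiset.mem_singleton] at hp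
      rcases hp with hp | hp <;> subst hp
      · exact ⟨by omega, hA0⟩
      · exact ⟨by omega, hB0⟩
    · simp only [Multiset.insert_eq_cons, Multiset.map_cons, Multiset.map_singleton,
        Multiset.prod_cons, Multiset.prod_singleton]
      rw [key, keyA, keyB]
    · simp only [Multiset.insert_eq_cons, Multiset.map_cons, Multiset.map_singleton,
        Multiset.sum_cons, Multiset.sum_singleton]
      omega
    · simp only [Multiset.insert_eq_cons, Multiset.map_cons, Multiset.map_singleton,
        Multiset.sum_cons, Multiset.sum_singleton]
      have hv : ∃ v, 1 ≤ v ∧ r = u + v ∧ v < m := ⟨r - u, by omega, by omega, by omega⟩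
      obtain ⟨v, hv1, hv2, hv3⟩ := hv
      subst hv2
      have : u + v - u = v := by omega
      rw [this]
      nlinarith [hv1, hv3, hu1]

lemma extract_bad_pair {α : Type*} {R : α → α → Prop} {S : Multiset α}
    (h : ¬ S.Pairwise R) : ∃ a b T, S = a ::ₘ b ::ₘ T ∧ ¬ R a b := by
  by_contra hc
  push_neg at hc
  apply h
  refine ⟨S.toList, (Multiset.coe_toList S).symm, ?_⟩
  rw [List.pairwise_iff_forall_sublist]
  intro a b hab
  have hle : (↑[a, b] : Multiset α) ≤ ↑S.toList := Multiset.coe_le.mpr hab.subperm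
  rw [Multiset.coe_toList] at hle
  obtain ⟨T, hT⟩ := Multiset.le_iff_exists_add.mp hle
  have hST : S = a ::ₘ b ::ₘ T := by
    rw [hT, show (↑[a, b] : Multiset α) = a ::ₘ b ::ₘ 0 from rfl]
    simp
  exact hc a b T hST

lemma sqsum_le (S : Multiset (ℕ × ℂ)) :
    (S.map fun p => p.1 * p.1).sum ≤ (S.map Prod.fst).sum * (S.map Prod.fst).sum := by
  induction S using Multiset.induction with
  | empty => simp
  | cons a S ih =>
    simp only [Multiset.map_cons, Multiset.sum_cons]
    nlinarith [ih, Nat.zero_le (a.1 * (Multiset.map Prod.fst S).sum)]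

lemma qString_one (q a : ℂ) : qString q a 1 = 1 - Polynomial.C a * Polynomial.X := by
  unfold qString
  rw [Finset.prod_range_one]
  norm_num

lemma base_factorization (q : ℂ) :
    ∀ (N : ℕ) (π : Polynomial ℂ), π.natDegree ≤ N → π.coeff 0 = 1 →
      ∃ S : Multiset (ℕ × ℂ), (∀ p ∈ S, 1 ≤ p.1 ∧ p.2 ≠ 0) ∧
        π = (S.map fun p => qString q p.2 p.1).prod := by
  intro N
  induction N with
  | zero =>
    intro π hd h0
    have : π = Polynomial.C (π.coeff 0) := Polynomial.eq_C_of_natDegree_le_zero hd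
    refine ⟨0, by simp, ?_⟩
    rw [this, h0]
    simp
  | succ N ih =>
    intro π hd h0
    by_cases hd0 : π.natDegree = 0
    · have : π = Polynomial.C (π.coeff 0) := Polynomial.eq_C_of_natDegree_le_zero (le_of_eq hd0)
      refine ⟨0, by simp, ?_⟩
      rw [this, h0]
      simp
    · have hdeg : 0 < π.degree := by
        exact Polynomial.natDegree_pos_iff_degree_pos.mp (by omega)
      obtain ⟨r, hroot⟩ := Complex.exists_root hdeg
      have hr0 : r ≠ 0 := by
        intro h
        subst h
        have := hroot
        rw [Polynomial.IsRoot, ← Polynomial.coeff_zero_eq_eval_zero, h0] at this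
        exact one_ne_zero this
      obtain ⟨g, hg⟩ := (Polynomial.dvd_iff_isRoot.mpr hroot)
      set h : Polynomial ℂ := (- Polynomial.C r) * g with hh
      have hfac : π = (1 - Polynomial.C r⁻¹ * Polynomial.X) * h := by
        rw [hh, hg]
        have : (1 - Polynomial.C r⁻¹ * Polynomial.X) * (- Polynomial.C r)
            = Polynomial.X - Polynomial.C r := by
          have hC : Polynomial.C r⁻¹ * Polynomial.C r = 1 := by
            rw [← Polynomial.C_mul, inv_mul_cancel₀ hr0, Polynomial.C_1]
          ring_nf
          linear_combination Polynomial.X * hC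
        rw [← this]
        ring
      have hco : h.coeff 0 = 1 := by
        have := h0
        rw [hfac, Polynomial.mul_coeff_zero] at this
        simpa using this
      have hh0 : h ≠ 0 := fun hz => by simp [hz] at hco
      have hlin : (1 - Polynomial.C r⁻¹ * Polynomial.X).natDegree = 1 := by
        have : (1 : Polynomial ℂ) - Polynomial.C r⁻¹ * Polynomial.X
            = Polynomial.C (-r⁻¹) * Polynomial.X + Polynomial.C 1 := by
          rw [Polynomial.C_neg, Polynomial.C_1]; ring
        rw [this]
        exact Polynomial.natDegree_linear (neg_ne_zero.mpr (inv_ne_zero hr0))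
      have hπ0 : π ≠ 0 := fun hz => by simp [hz] at h0
      have hdh : h.natDegree ≤ N := by
        have hl0 : (1 - Polynomial.C r⁻¹ * Polynomial.X) ≠ 0 := fun hz => by
          rw [hz] at hlin; simp at hlin
        have := Polynomial.natDegree_mul hl0 hh0
        rw [← hfac, hlin] at this
        omega
      obtain ⟨S, hS1, hS2⟩ := ih h hdh hco
      refine ⟨(1, r⁻¹) ::ₘ S, ?_, ?_⟩
      · intro p hp
        rcases Multiset.mem_cons.mp hp with hp | hp
        · subst hp; exact ⟨le_refl 1, inv_ne_zero hr0⟩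
        · exact hS1 p hp
      · rw [Multiset.map_cons, Multiset.prod_cons, ← hS2, qString_one, hfac]

lemma main_aux (q : ℂ) (hq0 : q ≠ 0) (π : Polynomial ℂ) (d : ℕ) :
    ∀ (n : ℕ) (S : Multiset (ℕ × ℂ)), (∀ p ∈ S, 1 ≤ p.1 ∧ p.2 ≠ 0) →
      π = (S.map fun p => qString q p.2 p.1).prod →
      (S.map Prod.fst).sum = d →
      d * d - (S.map fun p => p.1 * p.1).sum = n →
      ∃ S' : Multiset (ℕ × ℂ), (∀ p ∈ S', 1 ≤ p.1 ∧ p.2 ≠ 0) ∧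
        Multiset.Pairwise (GenPos q) S' ∧
        π = (S'.map fun p => qString q p.2 p.1).prod := by
  intro n
  induction n using Nat.strong_induction_on with
  | _ n ih =>
    intro S h1 h2 h3 h4
    by_cases hP : Multiset.Pairwise (GenPos q) S
    · exact ⟨S, h1, hP, h2⟩
    obtain ⟨p₁, p₂, T, hS, hnp⟩ := extract_bad_pair hP
    simp only [GenPos] at hnp
    push_neg at hnp
    obtain ⟨s, hs1, hs2, hs3, hs4⟩ := hnp
    have hp₁ : 1 ≤ p₁.1 ∧ p₁.2 ≠ 0 := h1 p₁ (by rw [hS]; simp)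
    have hp₂ : 1 ≤ p₂.1 ∧ p₂.2 ≠ 0 := h1 p₂ (by rw [hS]; simp)
    -- get a merged S₀ replacing p₁, p₂
    have hcore : ∃ S₀ : Multiset (ℕ × ℂ),
        (∀ p ∈ S₀, 1 ≤ p.1 ∧ p.2 ≠ 0) ∧
        (S₀.map fun p => qString q p.2 p.1).prod
          = qString q p₁.2 p₁.1 * qString q p₂.2 p₂.1 ∧
        (S₀.map Prod.fst).sum = p₁.1 + p₂.1 ∧
        p₁.1 * p₁.1 + p₂.1 * p₂.1 < (S₀.map fun p => p.1 * p.1).sum := by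
      rcases le_or_gt 0 s with hs | hs
      · rw [abs_of_nonneg hs] at hs1 hs2
        exact merge_core q hq0 p₁.1 p₂.1 hp₁.1 hp₂.1 p₁.2 p₂.2 hp₂.2 s hs1 hs2 hs3 hs4
      · rw [abs_of_neg hs] at hs1 hs2
        have ha0 : p₁.2 ≠ 0 := hp₁.2
        have hq2 : p₂.2 / p₁.2 = q ^ (-s) := by
          rw [zpow_neg, ← hs4, inv_div]
        obtain ⟨S₀, g1, g2, g3, g4⟩ := merge_core q hq0 p₂.1 p₁.1 hp₂.1 hp₁.1 p₂.2 p₁.2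
          hp₁.2 (-s) (by rw [abs_sub_comm]; omega) (by omega) (by omega) hq2
        exact ⟨S₀, g1, by rw [g2, mul_comm], by omega, by omega⟩
    obtain ⟨S₀, g1, g2, g3, g4⟩ := hcore
    set S' := S₀ + T with hS'
    have h1' : ∀ p ∈ S', 1 ≤ p.1 ∧ p.2 ≠ 0 := by
      intro p hp
      rcases Multiset.mem_add.mp hp with hp | hp
      · exact g1 p hp
      · exact h1 p (by rw [hS]; exact Multiset.mem_cons_of_mem (Multiset.mem_cons_of_mem hp))
    have h2' : π = (S'.map fun p => qString q p.2 p.1).prod := by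
      rw [h2, hS, hS']
      simp only [Multiset.map_cons, Multiset.prod_cons, Multiset.map_add, Multiset.prod_add, g2]
      ring
    have h3' : (S'.map Prod.fst).sum = d := by
      rw [hS'] at *
      rw [hS] at h3
      simp only [Multiset.map_add, Multiset.sum_add, Multiset.map_cons, Multiset.sum_cons] at *
      omega
    have hsq : (S.map fun p => p.1 * p.1).sum < (S'.map fun p => p.1 * p.1).sum := by
      rw [hS, hS']
      simp only [Multiset.map_add, Multiset.sum_add, Multiset.map_cons, Multiset.sum_cons]
      omega
    have hbd : (S'.map fun p => p.1 * p.1).sum ≤ d * d := by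
      have := sqsum_le S'
      rw [h3'] at this
      exact this
    exact ih (d * d - (S'.map fun p => p.1 * p.1).sum) (by omega) S' h1' h2' h3' rfl

/-- existence of the q-factorization: every polynomial
`π ∈ ℂ[u]` with constant coefficient `1` is a product `∏_{(m,a)∈S} π_a^m` over
a finite multiset `S` of pairs `(m,a)` (`m ≥ 1`, `a ≠ 0`) which are pairwise in
general position. -/
theorem qFactorization_exists
    (q : ℂ) (hq0 : q ≠ 0) (hq : ∀ n : ℕ, 1 ≤ n → q ^ n ≠ 1)
    (π : Polynomial ℂ) (hπ : π.coeff 0 = 1) :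
    ∃ S : Multiset (ℕ × ℂ),
      (∀ p ∈ S, 1 ≤ p.1 ∧ p.2 ≠ 0) ∧
      Multiset.Pairwise (GenPos q) S ∧
      π = (S.map fun p => qString q p.2 p.1).prod := by
  obtain ⟨S₀, h1, h2⟩ := base_factorization q π.natDegree π le_rfl hπ
  exact main_aux q hq0 π ((S₀.map Prod.fst).sum)
    ((S₀.map Prod.fst).sum * (S₀.map Prod.fst).sum - (S₀.map fun p => p.1 * p.1).sum)
    S₀ h1 h2 rfl rfl
end

section
/- Let π, η ∈ ℂ[u] be polynomials with constant coefficient 1. If π(u)·π(q²u) = η(u)·η(q²u) as polynomials in ℂ[u] (where π(q²u) denotes the composition of π with the polynomial q²·u), then π = η. -/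
open Polynomial

lemma sum_range_split (f : ℕ → ℂ) (m : ℕ) :
    ∑ i ∈ Finset.range (m + 2), f i = f 0 + f (m + 1) + ∑ i ∈ Finset.range m, f (i + 1) := by
  rw [Finset.sum_range_succ, Finset.sum_range_succ']; ring

lemma coeff_comp_C_mul_X' (p : Polynomial ℂ) (c : ℂ) (k : ℕ) :
    (p.comp (Polynomial.C c * Polynomial.X)).coeff k = c ^ k * p.coeff k := by
  induction p using Polynomial.induction_on' with
  | add p r hp hr => simp [add_comp, hp, hr, mul_add]
  | monomial n a =>
      simp only [monomial_comp, mul_pow, ← C_pow, ← mul_assoc, ← C_mul, coeff_C_mul,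
        coeff_X_pow, coeff_monomial]
      rcases eq_or_ne n k with rfl | hnk
      · simp [mul_comm]
      · simp [hnk, Ne.symm hnk]

/-- if `π, η ∈ ℂ[u]` have constant coefficient `1` and
`π(u)·π(q²u) = η(u)·η(q²u)`, then `π = η`.  Here `π(q²u)` is the composition of
`π` with the polynomial `q²·u`. -/
theorem eq_of_mul_qsq_scale_eq
    (q : ℂ) (hq0 : q ≠ 0) (hq : ∀ n : ℕ, 1 ≤ n → q ^ n ≠ 1)
    (π η : Polynomial ℂ) (hπ : π.coeff 0 = 1) (hη : η.coeff 0 = 1)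
    (h : π * π.comp (Polynomial.C (q ^ 2) * Polynomial.X)
        = η * η.comp (Polynomial.C (q ^ 2) * Polynomial.X)) :
    π = η := by
  have key : ∀ n, π.coeff n = η.coeff n := by
    intro n
    induction n using Nat.strong_induction_on with
    | _ n ih =>
      rcases n with _ | m
      · simp [hπ, hη]
      set n := m + 1 with hn
      have hcoef := congrArg (fun p => Polynomial.coeff p n) h
      simp only [coeff_mul, coeff_comp_C_mul_X'] at hcoef
      rw [Finset.Nat.sum_antidiagonal_eq_sum_range_succ
            (f := fun i j => π.coeff i * ((q ^ 2) ^ j * π.coeff j)),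
          Finset.Nat.sum_antidiagonal_eq_sum_range_succ
            (f := fun i j => η.coeff i * ((q ^ 2) ^ j * η.coeff j)),
          show n.succ = m + 2 from rfl] at hcoef
      simp only [sum_range_split] at hcoef
      have hmid : ∀ i ∈ Finset.range m,
          π.coeff (i + 1) * ((q ^ 2) ^ (n - (i + 1)) * π.coeff (n - (i + 1)))
          = η.coeff (i + 1) * ((q ^ 2) ^ (n - (i + 1)) * η.coeff (n - (i + 1))) := by
        intro i hi
        rw [Finset.mem_range] at hi
        rw [ih (i + 1) (by omega), ih (n - (i + 1)) (by omega)]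
      rw [Finset.sum_congr rfl hmid] at hcoef
      simp only [← hn, Nat.sub_zero, Nat.sub_self, pow_zero, hπ, hη, one_mul, mul_one] at hcoef
      have hne : (1 : ℂ) + (q ^ 2) ^ n ≠ 0 := by
        intro h0
        have : (q ^ 2) ^ n = -1 := by linear_combination h0
        have : q ^ (4 * n) = 1 := by
          rw [show 4 * n = 2 * n * 2 by ring, pow_mul, pow_mul, this]; ring
        exact hq (4 * n) (by omega) this
      have : π.coeff n * (1 + (q ^ 2) ^ n) = η.coeff n * (1 + (q ^ 2) ^ n) := by
        linear_combination hcoef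
      exact mul_right_cancel₀ hne this
  exact Polynomial.ext key
end
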